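/- Let B be a complete Hausdorff topological field of characteristic zero and R a B-vector space with the inductive limit topology from its finite-dimensional subspaces. Then every vector subspace of R is closed, and R is Hausdorff. -/

import Mathlib

/-- The canonical topology on a finite-dimensional vector space `V` over a
topological field `B`. -/
noncomputable def canonicalFDTopology (B V : Type*) [Field B] [TopologicalSpace B]
    [AddCommGroup V] [Module B V] [FiniteDimensional B V] : TopologicalSpace V :=
  TopologicalSpace.induced (Module.finBasis B V).equivFun Pi.topologicalSpace

/-- The inductive limit topology on a `B`-vector space `R` coming from its
finite-dimensional subspaces. -/
noncomputable def indLimTopology (B R : Type*) [Field B] [TopologicalSpace B]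
    [AddCommGroup R] [Module B R] : TopologicalSpace R :=
  ⨆ (V : Submodule B R) (h : FiniteDimensional B V),
    TopologicalSpace.coinduced (Subtype.val : V → R) (@canonicalFDTopology B V _ _ _ _ h)


theorem dual_continuous_indLim {B : Type*} [Field B] [TopologicalSpace B] [IsTopologicalRing B]
    {R : Type*} [AddCommGroup R] [Module B R] (f : R →ₗ[B] B) :
    @Continuous R B (indLimTopology B R) _ f := by
  rw [indLimTopology, continuous_iSup_dom]
  intro V
  rw [continuous_iSup_dom]
  intro hV
  rw [continuous_coinduced_dom]
  letI : FiniteDimensional B V := hV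
  letI : TopologicalSpace V := canonicalFDTopology B V
  show @Continuous V B (canonicalFDTopology B V) _ (f ∘ (Subtype.val : V → R))
  have hkey : (f ∘ (Subtype.val : V → R)) =
      ((f.comp V.subtype).comp
        ((Module.finBasis B V).equivFun.symm : (Fin (Module.finrank B V) → B) →ₗ[B] V)) ∘
      (Module.finBasis B V).equivFun := by
    ext v
    show f v = _
    conv_lhs => rw [← (Module.finBasis B V).sum_repr v]
    simp [mul_comm]
  rw [hkey]
  have h1 : Continuous ((Module.finBasis B V).equivFun : V → (Fin (Module.finrank B V) → B)) :=
    continuous_induced_dom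
  exact ((f.comp V.subtype).comp
      ((Module.finBasis B V).equivFun.symm :
        (Fin (Module.finrank B V) → B) →ₗ[B] V)).continuous_on_pi.comp h1

/-- Over a complete Hausdorff topological field `B` of
characteristic zero, in the inductive limit topology on a `B`-vector space `R`
every vector subspace is closed, and `R` is Hausdorff. -/
theorem subspace_closed_and_t2_indLim {B : Type*} [Field B] [UniformSpace B]
    [CompleteSpace B] [T2Space B] [IsTopologicalRing B] [IsTopologicalDivisionRing B] [CharZero B]
    {R : Type*} [AddCommGroup R] [Module B R] :
    (∀ W : Submodule B R, @IsClosed R (indLimTopology B R) (W : Set R)) ∧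
    @T2Space R (indLimTopology B R) := by
  letI : TopologicalSpace R := indLimTopology B R
  have hcont : ∀ f : R →ₗ[B] B, Continuous f := fun f => dual_continuous_indLim f
  constructor
  · intro W
    have hW : (W : Set R) =
        ⋂ f : {f : R →ₗ[B] B // W ≤ LinearMap.ker f}, (f.1 ⁻¹' {0} : Set R) := by
      ext x
      simp only [Set.mem_iInter, Set.mem_preimage, Set.mem_singleton_iff, SetLike.mem_coe]
      constructor
      · intro hx f; exact f.2 hx
      · intro h
        by_contra hx
        obtain ⟨f, hf0, hfbot⟩ := W.exists_dual_map_eq_bot_of_notMem hx inferInstance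
        refine hf0 (h ⟨f, fun w hw => ?_⟩)
        have : f w ∈ W.map f := Submodule.mem_map_of_mem hw
        rw [hfbot] at this
        simpa using this
    rw [hW]
    exact isClosed_iInter fun f => isClosed_singleton.preimage (hcont f.1)
  · constructor
    intro x y hxy
    have hne : x - y ≠ 0 := sub_ne_zero.mpr hxy
    have : ¬ ∀ f : Module.Dual B R, f (x - y) = 0 := by
      rw [Module.forall_dual_apply_eq_zero_iff B (x - y)]
      exact hne
    push_neg at this
    obtain ⟨f, hf⟩ := this
    have hfxy : f x ≠ f y := by
      intro h
      apply hf
      rw [map_sub, h, sub_self]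
    obtain ⟨u, v, hu, hv, hxu, hyv, huv⟩ := t2_separation hfxy
    exact ⟨f ⁻¹' u, f ⁻¹' v, hu.preimage (hcont f), hv.preimage (hcont f), hxu, hyv,
      huv.preimage f⟩
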